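/- arXiv:2508.13879 — 2 statements merged into one kernel-verified Lean document; each statement's English description precedes it below -/
import Mathlib

section
/- For all real x and y with x + iy ≠ 0, one has |sinc(x+iy)| ≤ e^{π|y|}|sinc(x)| + |e^{π|y|} − 1|/(π|y|) when y ≠ 0, where sinc(z) = sin(πz)/(πz). -/
open Complex Real

/-- The entire extension of the sinc function, `sinc z = sin (π z) / (π z)`. -/
noncomputable def csinc (z : ℂ) : ℂ :=
  if z = 0 then 1 else Complex.sin (Real.pi * z) / (Real.pi * z)

/-- The real sinc function (with `sinc 0 = 1`). -/
noncomputable def rsinc (x : ℝ) : ℝ :=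
  if x = 0 then 1 else Real.sin (Real.pi * x) / (Real.pi * x)

theorem csinc_bound_split (x y : ℝ) (hy : y ≠ 0) :
    ‖csinc (x + y * Complex.I)‖ ≤
      Real.exp (Real.pi * |y|) * |rsinc x| +
        |Real.exp (Real.pi * |y|) - 1| / (Real.pi * |y|) := by
  have hπ : (0:ℝ) < Real.pi := Real.pi_pos
  have hy' : (0:ℝ) < |y| := abs_pos.mpr hy
  set a : ℝ := Real.pi * |y| with ha
  have ha0 : 0 < a := mul_pos hπ hy'
  set z : ℂ := x + y * Complex.I with hz
  have him : z.im = y := by simp [hz]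
  have hre : z.re = x := by simp [hz]
  have hz0 : z ≠ 0 := by
    intro h
    exact hy (by rw [← him, h]; simp)
  have habsz : 0 < ‖z‖ := by
    exact norm_pos_iff.mpr hz0
  have hx_le : |x| ≤ ‖z‖ := by rw [← hre]; exact Complex.abs_re_le_norm z
  have hy_le : |y| ≤ ‖z‖ := by rw [← him]; exact Complex.abs_im_le_norm z
  -- expand sin
  have hsin : Complex.sin (Real.pi * z) =
      (Real.sin (Real.pi * x) * Real.cosh (Real.pi * y) : ℝ)
      + (Real.cos (Real.pi * x) * Real.sinh (Real.pi * y) : ℝ) * Complex.I := by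
    rw [hz, mul_add, Complex.sin_add]
    rw [show (Real.pi : ℂ) * (↑y * Complex.I) = (↑(Real.pi * y) : ℂ) * Complex.I by
      push_cast; ring]
    rw [Complex.sin_mul_I, Complex.cos_mul_I]
    push_cast
    ring
  have hbound : ‖Complex.sin (Real.pi * z)‖ ≤
      |Real.sin (Real.pi * x)| * Real.exp a + (Real.exp a - 1) := by
    rw [hsin]
    refine (norm_add_le _ _).trans ?_
    rw [norm_mul, Complex.norm_I, mul_one]
    rw [Complex.norm_real, Complex.norm_real, Real.norm_eq_abs, Real.norm_eq_abs, abs_mul, abs_mul]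
    have hcosh : |Real.cosh (Real.pi * y)| ≤ Real.exp a := by
      rw [abs_of_pos (Real.cosh_pos _), ← Real.cosh_abs, abs_mul,
        abs_of_pos hπ, Real.cosh_eq]
      have : Real.exp (-a) ≤ Real.exp a := Real.exp_le_exp.mpr (by linarith)
      linarith
    have hsinh : |Real.sinh (Real.pi * y)| ≤ Real.exp a - 1 := by
      rw [Real.abs_sinh, abs_mul, abs_of_pos hπ]
      have h1 : 1 ≤ Real.cosh a := Real.one_le_cosh a
      have := Real.sinh_eq a
      have := Real.cosh_eq a
      nlinarith [Real.exp_pos a, Real.exp_pos (-a)]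
    have hc1 : |Real.cos (Real.pi * x)| ≤ 1 := Real.abs_cos_le_one _
    have hs0 : 0 ≤ |Real.sin (Real.pi * x)| := abs_nonneg _
    nlinarith [abs_nonneg (Real.sinh (Real.pi * y)), Real.cosh_pos (x := Real.pi * y),
      abs_nonneg (Real.cos (Real.pi * x))]
  -- abs of csinc
  have habs : ‖csinc z‖ =
      ‖Complex.sin (Real.pi * z)‖ / (Real.pi * ‖z‖) := by
    rw [csinc, if_neg hz0, norm_div, norm_mul, Complex.norm_real, Real.norm_eq_abs, abs_of_pos hπ]
  rw [habs]
  have key : ‖Complex.sin (Real.pi * z)‖ / (Real.pi * ‖z‖) ≤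
      (|Real.sin (Real.pi * x)| * Real.exp a) / (Real.pi * ‖z‖)
      + (Real.exp a - 1) / (Real.pi * ‖z‖) := by
    rw [← add_div]
    gcongr
  refine key.trans (add_le_add ?_ ?_)
  · -- first term
    by_cases hx : x = 0
    · have : Real.sin (Real.pi * x) = 0 := by rw [hx]; simp
      rw [this, abs_zero, zero_mul, zero_div, rsinc, if_pos hx, abs_one, mul_one]
      exact (Real.exp_pos a).le
    · rw [rsinc, if_neg hx, abs_div, abs_mul, abs_of_pos hπ]
      have hx0 : 0 < |x| := abs_pos.mpr hx
      rw [mul_div_assoc', mul_comm (Real.exp a)]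
      gcongr
  · -- second term
    rw [_root_.abs_of_nonneg (by nlinarith [Real.add_one_le_exp a] : (0:ℝ) ≤ Real.exp a - 1), ha]
    gcongr
    nlinarith [Real.add_one_le_exp (Real.pi * |y|)]
end

section
/- The family of integer-shifted sinc functions is L²-orthogonal: for all distinct integers j, k, the integral over ℝ of sinc(s − j)·sinc(s − k) ds equals 0, where sinc(s) = sin(πs)/(πs) with sinc(0)=1. -/
open MeasureTheory Real

open Filter Topology

lemma rsinc_even (x : ℝ) : rsinc (-x) = rsinc x := by
  unfold rsinc
  rcases eq_or_ne x 0 with h | h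
  · simp [h]
  · rw [if_neg (neg_ne_zero.2 h), if_neg h, mul_neg, Real.sin_neg, neg_div_neg_eq]

lemma measurable_rsinc : Measurable rsinc := by
  unfold rsinc
  exact Measurable.ite (measurableSet_singleton 0) measurable_const
    ((Real.measurable_sin.comp (measurable_const.mul measurable_id)).div
      (measurable_const.mul measurable_id))

lemma sin_pi_shift (s : ℝ) (n : ℤ) :
    Real.sin (π * (s - n)) = (-1) ^ n * Real.sin (π * s) := by
  rw [show π * (s - n) = π * s - n * π by ring, Real.sin_sub_int_mul_pi]

lemma neg_one_zpow_abs (n : ℤ) : |(-1 : ℝ) ^ n| = 1 := by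
  rcases Int.even_or_odd n with h | h
  · rw [h.neg_one_zpow]; norm_num
  · rw [h.neg_one_zpow]; norm_num

lemma sin_pi_shift_sq (s : ℝ) (n : ℤ) :
    Real.sin (π * (s - n)) ^ 2 = Real.sin (π * s) ^ 2 := by
  rw [sin_pi_shift, mul_pow, ← sq_abs ((-1:ℝ) ^ n), neg_one_zpow_abs]
  ring

lemma rsinc_sq_le (x : ℝ) : rsinc x ^ 2 ≤ 2 * (1 + x ^ 2)⁻¹ := by
  have hx2 : (0:ℝ) < 1 + x ^ 2 := by positivity
  rw [show (2:ℝ) * (1 + x ^ 2)⁻¹ = 2 / (1 + x ^ 2) from (div_eq_mul_inv 2 _).symm,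
    le_div_iff₀ hx2]
  have hπ : (1:ℝ) ≤ π := by linarith [Real.pi_gt_three]
  unfold rsinc
  split_ifs with h
  · subst h; norm_num
  · rw [div_pow]
    have hd : (0:ℝ) < (π * x) ^ 2 := by positivity
    rw [div_mul_eq_mul_div, div_le_iff₀ hd]
    have hs1 : Real.sin (π * x) ^ 2 ≤ 1 := sin_sq_le_one _
    have hs2 : Real.sin (π * x) ^ 2 ≤ (π * x) ^ 2 := Real.sin_sq_le_sq
    rcases le_or_gt (x ^ 2) 1 with hx | hx
    · nlinarith [sq_nonneg (π * x)]
    · have hπ2 : (1:ℝ) ≤ π ^ 2 := by nlinarith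
      have hk : x ^ 2 ≤ π ^ 2 * x ^ 2 := by nlinarith [sq_nonneg x]
      have he : (π * x) ^ 2 = π ^ 2 * x ^ 2 := by ring
      nlinarith

lemma integrable_rsinc_sq : Integrable (fun x : ℝ => rsinc x ^ 2) := by
  refine Integrable.mono' (integrable_inv_one_add_sq.const_mul 2)
    ((measurable_rsinc.pow_const 2).aestronglyMeasurable)
    (Eventually.of_forall fun x => ?_)
  rw [Real.norm_eq_abs, abs_of_nonneg (sq_nonneg _)]
  exact rsinc_sq_le x

lemma integrable_mul_shift (c : ℝ) :
    Integrable (fun s : ℝ => rsinc (s - c) * rsinc s) := by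
  have h1 : Integrable (fun s : ℝ => (rsinc (s - c) ^ 2 + rsinc s ^ 2) / 2) :=
    ((integrable_rsinc_sq.comp_sub_right c).add integrable_rsinc_sq).div_const 2
  refine h1.mono' ?_ (Eventually.of_forall fun s => ?_)
  · exact ((measurable_rsinc.comp (measurable_id.sub_const c)).mul
      measurable_rsinc).aestronglyMeasurable
  · rw [Real.norm_eq_abs, abs_mul]
    nlinarith [sq_nonneg (|rsinc (s - c)| - |rsinc s|), sq_abs (rsinc (s - c)),
      sq_abs (rsinc s)]


lemma abs_aux (m : ℤ) (s : ℝ) : |Real.sin (π * s) ^ 2 / (s - m)| ≤ π := by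
  rcases eq_or_ne s (m : ℝ) with h | h
  · simp [h, Real.pi_nonneg]
  · have hsm : s - m ≠ 0 := sub_ne_zero.2 h
    rw [abs_div, div_le_iff₀ (abs_pos.2 hsm)]
    have h1 : |Real.sin (π * s) ^ 2| = |Real.sin (π * s)| * |Real.sin (π * (s - m))| := by
      rw [sin_pi_shift, abs_mul, neg_one_zpow_abs, one_mul, ← abs_mul, ← sq]
    rw [h1]
    have h2 : |Real.sin (π * s)| ≤ 1 := Real.abs_sin_le_one _
    have h3 : |Real.sin (π * (s - m))| ≤ π * |s - m| := by
      calc |Real.sin (π * (s - m))| ≤ |π * (s - m)| := Real.abs_sin_le_abs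
        _ = π * |s - m| := by rw [abs_mul, abs_of_nonneg Real.pi_nonneg]
    calc |Real.sin (π * s)| * |Real.sin (π * (s - m))| ≤ 1 * (π * |s - m|) :=
          mul_le_mul h2 h3 (abs_nonneg _) one_pos.le
      _ = π * |s - m| := one_mul _

lemma ii_aux (m : ℤ) (a b : ℝ) :
    IntervalIntegrable (fun s => Real.sin (π * s) ^ 2 / (s - m)) volume a b := by
  rw [intervalIntegrable_iff]
  refine Integrable.mono' (g := fun _ => π)
    (integrableOn_const measure_Ioc_lt_top.ne)
    (((Real.measurable_sin.comp (measurable_const.mul measurable_id)).pow_const 2).div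
      (measurable_id.sub_const (m:ℝ))).aestronglyMeasurable
    (Eventually.of_forall fun s => ?_)
  rw [Real.norm_eq_abs]
  exact abs_aux m s

lemma odd_zero (a : ℝ) : ∫ s in (-a)..a, Real.sin (π * s) ^ 2 / s = 0 := by
  have h0 : IntervalIntegrable (fun s => Real.sin (π * s) ^ 2 / s) volume (-a) 0 := by
    simpa using ii_aux 0 (-a) 0
  have h1 : IntervalIntegrable (fun s => Real.sin (π * s) ^ 2 / s) volume 0 a := by
    simpa using ii_aux 0 0 a
  have E : ∀ s : ℝ, Real.sin (π * -s) ^ 2 / -s = -(Real.sin (π * s) ^ 2 / s) := fun s => by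
    rw [mul_neg, Real.sin_neg, neg_sq, div_neg]
  have h2 := intervalIntegral.integral_comp_neg (a := 0) (b := a)
    (fun s => Real.sin (π * s) ^ 2 / s)
  simp only [neg_zero] at h2
  have h3 : (∫ s in (-a)..(0:ℝ), Real.sin (π * s) ^ 2 / s)
      = -∫ s in (0:ℝ)..a, Real.sin (π * s) ^ 2 / s := by
    rw [← h2, ← intervalIntegral.integral_neg]
    exact intervalIntegral.integral_congr fun s _ => E s
  rw [← intervalIntegral.integral_add_adjacent_intervals h0 h1, h3]
  ring

lemma rsinc_int_zero (n : ℤ) (hn : n ≠ 0) : rsinc n = 0 := by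
  unfold rsinc
  rw [if_neg (by exact_mod_cast hn), mul_comm, Real.sin_int_mul_pi, zero_div]

lemma key_eq (n : ℤ) (hn : n ≠ 0) (s : ℝ) :
    rsinc (s - n) * rsinc s =
      ((-1) ^ n / (π ^ 2 * n)) *
        (Real.sin (π * s) ^ 2 / (s - n) - Real.sin (π * s) ^ 2 / s) := by
  have hπ : (π : ℝ) ≠ 0 := Real.pi_ne_zero
  have hnn : ((n : ℝ)) ≠ 0 := Int.cast_ne_zero.2 hn
  rcases eq_or_ne s 0 with rfl | hs
  · rw [zero_sub, rsinc_even, rsinc_int_zero n hn, zero_mul, mul_zero, Real.sin_zero]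
    ring
  · rcases eq_or_ne s (n : ℝ) with rfl | hsn
    · have h1 : rsinc ((n : ℝ) - n) = 1 := by
        rw [sub_self]; unfold rsinc; rw [if_pos rfl]
      have h2 : Real.sin (π * n) = 0 := by
        rw [mul_comm]; exact Real.sin_int_mul_pi n
      rw [h1, one_mul, rsinc_int_zero n hn, h2]
      ring
    · have hsub : s - (n : ℝ) ≠ 0 := sub_ne_zero.2 hsn
      unfold rsinc
      rw [if_neg hsub, if_neg hs, sin_pi_shift]
      field_simp
      ring

lemma interval_eq (n : ℤ) (hn : n ≠ 0) (R : ℝ) :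
    (∫ s in (-R)..R, rsinc (s - n) * rsinc s)
      = ((-1) ^ n / (π ^ 2 * n)) *
          -(∫ s in (R - n)..(R + n), Real.sin (π * s) ^ 2 / s) := by
  have ii0 : ∀ a b : ℝ,
      IntervalIntegrable (fun s => Real.sin (π * s) ^ 2 / s) volume a b := by
    intro a b; simpa using ii_aux 0 a b
  have step1 : (∫ s in (-R)..R, rsinc (s - n) * rsinc s)
      = ((-1) ^ n / (π ^ 2 * n)) *
          ((∫ s in (-R)..R, Real.sin (π * s) ^ 2 / (s - n))
            - ∫ s in (-R)..R, Real.sin (π * s) ^ 2 / s) := by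
    rw [intervalIntegral.integral_congr (g := fun s => ((-1) ^ n / (π ^ 2 * n)) *
        (Real.sin (π * s) ^ 2 / (s - n) - Real.sin (π * s) ^ 2 / s))
        (fun s _ => key_eq n hn s),
      intervalIntegral.integral_const_mul,
      intervalIntegral.integral_sub (ii_aux n (-R) R) (ii0 (-R) R)]
  have step2 : (∫ s in (-R)..R, Real.sin (π * s) ^ 2 / (s - n))
      = ∫ s in (-R - n)..(R - n), Real.sin (π * s) ^ 2 / s := by
    rw [← intervalIntegral.integral_comp_sub_right
        (fun s => Real.sin (π * s) ^ 2 / s) (n : ℝ)]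
    exact intervalIntegral.integral_congr fun s _ => by
      rw [sin_pi_shift_sq s n]
  have step3 : (∫ s in (-R - n)..(R - n), Real.sin (π * s) ^ 2 / s)
      = -∫ s in (R - n)..(R + n), Real.sin (π * s) ^ 2 / s := by
    have hadd := intervalIntegral.integral_add_adjacent_intervals
      (ii0 (-R - n) (R - n)) (ii0 (R - n) (R + n))
    have hfull : (∫ s in (-R - n)..(R + n), Real.sin (π * s) ^ 2 / s) = 0 := by
      rw [show -R - (n : ℝ) = -(R + n) by ring]
      exact odd_zero (R + n)
    linarith [hadd, hfull]
  rw [step1, step2, step3, odd_zero R, sub_zero]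

lemma key (n : ℤ) (hn : 0 < n) : ∫ s : ℝ, rsinc (s - n) * rsinc s = 0 := by
  have hn' : n ≠ 0 := hn.ne'
  have hncast : (0:ℝ) < (n:ℝ) := by exact_mod_cast hn
  have h1 : Tendsto (fun R : ℝ => ∫ s in (-R)..R, rsinc (s - n) * rsinc s) atTop
      (𝓝 (∫ s : ℝ, rsinc (s - n) * rsinc s)) :=
    intervalIntegral_tendsto_integral (integrable_mul_shift (n:ℝ))
      tendsto_neg_atTop_atBot tendsto_id
  have h2 : Tendsto (fun R : ℝ => ∫ s in (-R)..R, rsinc (s - n) * rsinc s) atTop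
      (𝓝 0) := by
    apply squeeze_zero_norm'
      (a := fun R : ℝ => |(-1) ^ n / (π ^ 2 * n)| * (2 * n) * (R - n)⁻¹)
    · filter_upwards [eventually_ge_atTop ((n:ℝ) + 1)] with R hR
      have hRn : (0:ℝ) < R - n := by linarith
      rw [interval_eq n hn' R, norm_mul, norm_neg]
      have hbound : ‖∫ s in (R - (n:ℝ))..(R + n), Real.sin (π * s) ^ 2 / s‖
          ≤ (R - n)⁻¹ * |(R + (n:ℝ)) - (R - n)| := by
        apply intervalIntegral.norm_integral_le_of_norm_le_const
        intro x hx
        rw [Set.uIoc_of_le (by linarith : R - (n:ℝ) ≤ R + n)] at hx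
        have hx0 : (0:ℝ) < x := lt_trans hRn hx.1
        rw [Real.norm_eq_abs, abs_div, abs_of_pos hx0, abs_of_nonneg (sq_nonneg _)]
        calc Real.sin (π * x) ^ 2 / x ≤ 1 / x := by
              gcongr
              exact Real.sin_sq_le_one _
          _ ≤ (R - n)⁻¹ := by
              rw [← one_div]
              exact one_div_le_one_div_of_le hRn hx.1.le
      calc ‖(-1:ℝ) ^ n / (π ^ 2 * n)‖ * ‖∫ s in (R - (n:ℝ))..(R + n),
              Real.sin (π * s) ^ 2 / s‖
          ≤ ‖(-1:ℝ) ^ n / (π ^ 2 * n)‖ * ((R - n)⁻¹ * |(R + (n:ℝ)) - (R - n)|) :=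
            mul_le_mul_of_nonneg_left hbound (norm_nonneg _)
        _ = |(-1) ^ n / (π ^ 2 * n)| * (2 * n) * (R - n)⁻¹ := by
            rw [Real.norm_eq_abs, show (R + (n:ℝ)) - (R - n) = 2 * n by ring,
              abs_of_pos (by linarith : (0:ℝ) < 2 * n)]
            ring
    · have hinv : Tendsto (fun R : ℝ => (R - (n:ℝ))⁻¹) atTop (𝓝 0) := by
        apply tendsto_inv_atTop_zero.comp
        exact tendsto_atTop_add_const_right atTop (-(n:ℝ)) tendsto_id |>.congr
          (fun R => by simp [sub_eq_add_neg])
      simpa using hinv.const_mul (|(-1:ℝ) ^ n / (π ^ 2 * n)| * (2 * n))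
  exact tendsto_nhds_unique h1 h2

lemma key_ne (n : ℤ) (hn : n ≠ 0) : ∫ s : ℝ, rsinc (s - n) * rsinc s = 0 := by
  rcases lt_or_gt_of_ne hn with h | h
  · have heq : ∀ s : ℝ, rsinc (-s - n) * rsinc (-s) = rsinc (s - ((-n : ℤ) : ℝ)) * rsinc s := by
      intro s
      rw [show -s - (n : ℝ) = -(s + n) by ring, rsinc_even, rsinc_even,
        show s + (n : ℝ) = s - ((-n : ℤ) : ℝ) by push_cast; ring]
    calc (∫ s : ℝ, rsinc (s - n) * rsinc s)
        = ∫ s : ℝ, rsinc (-s - n) * rsinc (-s) :=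
          (integral_neg_eq_self (fun s : ℝ => rsinc (s - n) * rsinc s) volume).symm
      _ = ∫ s : ℝ, rsinc (s - ((-n : ℤ) : ℝ)) * rsinc s := by simp_rw [heq]
      _ = 0 := key (-n) (by omega)
  · exact key n h

theorem sinc_shifts_orthogonal (j k : ℤ) (hjk : j ≠ k) :
    ∫ s : ℝ, rsinc (s - j) * rsinc (s - k) = 0 := by
  have h := integral_add_right_eq_self (μ := volume)
    (fun s : ℝ => rsinc (s - j) * rsinc (s - k)) (k : ℝ)
  rw [← h]
  have heq : ∀ s : ℝ, rsinc (s + k - j) * rsinc (s + k - k)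
      = rsinc (s - ((j - k : ℤ) : ℝ)) * rsinc s := by
    intro s
    rw [show s + (k : ℝ) - j = s - ((j - k : ℤ) : ℝ) by push_cast; ring,
      show s + (k : ℝ) - k = s by ring]
  simp_rw [heq]
  exact key_ne (j - k) (sub_ne_zero.2 hjk)
end
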